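/- Let G be a finite simple graph with vertex set V and let A_1, A_2 ⊆ V be attribute subsets. Then γ_{A_1}(G) = γ_{A_2}(G) (i.e., the relations ≡_{A_1} and ≡_{A_2} coincide) if and only if either (1) B_{A_1}(G) = B_{A_2}(G), or (2) each of B_{A_1}(G) and B_{A_2}(G) is either empty or equal to a single orbit of G. -/
import Mathlib


/-- The orbit of a vertex `x` under the automorphism group of the graph `G`:
`O(x) = {φ(x) : φ an automorphism of G}`. -/
def orb {V : Type*} (G : SimpleGraph V) (x : V) : Set V :=
  {y | ∃ φ : G ≃g G, φ x = y}

/-- The indiscernibility relation `x ≡_A y` iff `O(x) ∩ A = O(y) ∩ A`. -/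
def Indis {V : Type*} (G : SimpleGraph V) (A : Set V) (x y : V) : Prop :=
  orb G x ∩ A = orb G y ∩ A

/-- The `≡_A`-equivalence class `O_A(x)` of a vertex `x`. -/
def eqCls {V : Type*} (G : SimpleGraph V) (A : Set V) (x : V) : Set V :=
  {y | Indis G A x y}

/-- `O(A) = ⋃_{a ∈ A} O(a)`. -/
def orbSet {V : Type*} (G : SimpleGraph V) (A : Set V) : Set V :=
  ⋃ a ∈ A, orb G a

/-- Lower approximation `L_A(Q) = {x | O_A(x) ⊆ Q}`. -/
def lowerApprox {V : Type*} (G : SimpleGraph V) (A Q : Set V) : Set V :=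
  {x | eqCls G A x ⊆ Q}

/-- Upper approximation `U_A(Q) = {x | O_A(x) ∩ Q ≠ ∅}`. -/
def upperApprox {V : Type*} (G : SimpleGraph V) (A Q : Set V) : Set V :=
  {x | (eqCls G A x ∩ Q).Nonempty}

lemma orb_refl' {V : Type*} (G : SimpleGraph V) (x : V) : x ∈ orb G x :=
  ⟨RelIso.refl _, rfl⟩

lemma mem_orb_symm {V : Type*} {G : SimpleGraph V} {x y : V} (h : x ∈ orb G y) :
    y ∈ orb G x := by
  obtain ⟨φ, h⟩ := h
  exact ⟨φ.symm, by simp [← h]⟩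

lemma orb_eq_of_mem {V : Type*} {G : SimpleGraph V} {x y : V} (h : x ∈ orb G y) :
    orb G x = orb G y := by
  obtain ⟨φ, rfl⟩ := h
  ext z
  constructor
  · rintro ⟨ψ, rfl⟩; exact ⟨φ.trans ψ, rfl⟩
  · rintro ⟨ψ, rfl⟩; exact ⟨φ.symm.trans ψ, by simp⟩

lemma mem_orbSet_iff {V : Type*} {G : SimpleGraph V} {A : Set V} {x : V} :
    x ∈ orbSet G A ↔ (orb G x ∩ A).Nonempty := by
  simp only [orbSet, Set.mem_iUnion]
  constructor
  · rintro ⟨a, ha, hx⟩; exact ⟨a, mem_orb_symm hx, ha⟩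
  · rintro ⟨a, hax, ha⟩; exact ⟨a, ha, mem_orb_symm hax⟩

lemma mem_compl_orbSet_of_orb {V : Type*} {G : SimpleGraph V} {A : Set V} {x y : V}
    (hy : y ∈ (orbSet G A)ᶜ) (hxy : x ∈ orb G y) : x ∈ (orbSet G A)ᶜ := by
  simp only [Set.mem_compl_iff, mem_orbSet_iff] at *
  rw [orb_eq_of_mem hxy]; exact hy

lemma indis_char {V : Type*} {G : SimpleGraph V} {A : Set V} {x y : V} :
    Indis G A x y ↔ ((x ∉ orbSet G A ∧ y ∉ orbSet G A) ∨ orb G x = orb G y) := by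
  constructor
  · intro h
    rcases Set.eq_empty_or_nonempty (orb G x ∩ A) with he | ⟨a, hax, haA⟩
    · left
      rw [mem_orbSet_iff, mem_orbSet_iff]
      unfold Indis at h
      constructor
      · simp [he]
      · rw [← h, he]; simp
    · right
      have hay : a ∈ orb G y ∩ A := h ▸ ⟨hax, haA⟩
      exact (orb_eq_of_mem hax).symm.trans (orb_eq_of_mem hay.1)
  · rintro (⟨hx, hy⟩ | h)
    · rw [mem_orbSet_iff, Set.not_nonempty_iff_eq_empty] at hx hy
      unfold Indis; rw [hx, hy]
    · unfold Indis; rw [h]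

lemma B_eq_orb {V : Type*} {G : SimpleGraph V} {A₁ A₂ : Set V}
    (h : ∀ x y : V, Indis G A₁ x y ↔ Indis G A₂ x y) {x : V}
    (hx1 : x ∈ (orbSet G A₁)ᶜ) (hx2 : x ∉ (orbSet G A₂)ᶜ) :
    (orbSet G A₁)ᶜ = orb G x := by
  ext y
  constructor
  · intro hy
    have h1 : Indis G A₁ x y := by
      have hx1' := hx1
      rw [Set.mem_compl_iff, mem_orbSet_iff, Set.not_nonempty_iff_eq_empty] at hx1'
      have hy' := hy
      rw [Set.mem_compl_iff, mem_orbSet_iff, Set.not_nonempty_iff_eq_empty] at hy'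
      unfold Indis; rw [hx1', hy']
    have h2 := (h x y).mp h1
    rw [Set.notMem_compl_iff, mem_orbSet_iff] at hx2
    obtain ⟨a, hax, haA⟩ := hx2
    have hay : a ∈ orb G y ∩ A₂ := h2 ▸ ⟨hax, haA⟩
    have horb : orb G x = orb G y := (orb_eq_of_mem hax).symm.trans (orb_eq_of_mem hay.1)
    rw [horb]; exact orb_refl' G y
  · intro hy
    exact mem_compl_orbSet_of_orb hx1 hy

lemma indis_iff_orb_eq {V : Type*} {G : SimpleGraph V} {A : Set V}
    (h : (orbSet G A)ᶜ = ∅ ∨ ∃ z : V, (orbSet G A)ᶜ = orb G z) (x y : V) :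
    Indis G A x y ↔ orb G x = orb G y := by
  rw [indis_char]
  constructor
  · rintro (⟨hx, hy⟩ | he)
    · rw [← Set.mem_compl_iff] at hx hy
      rcases h with he | ⟨z, hz⟩
      · rw [he] at hx; exact absurd hx (Set.notMem_empty x)
      · rw [hz] at hx hy
        exact (orb_eq_of_mem hx).trans (orb_eq_of_mem hy).symm
    · exact he
  · exact fun he => Or.inr he

/-- `γ_{A₁}(G) = γ_{A₂}(G)` iff either `B_{A₁}(G) = B_{A₂}(G)`, or each of
`B_{A₁}(G)`, `B_{A₂}(G)` is empty or consists of a single orbit, where `B_A(G) = (O(A))ᶜ`. -/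
theorem stmt_2 {V : Type*} [Fintype V] (G : SimpleGraph V) (A₁ A₂ : Set V) :
    (∀ x y : V, Indis G A₁ x y ↔ Indis G A₂ x y) ↔
      ((orbSet G A₁)ᶜ = (orbSet G A₂)ᶜ ∨
        (((orbSet G A₁)ᶜ = ∅ ∨ ∃ x : V, (orbSet G A₁)ᶜ = orb G x) ∧
         ((orbSet G A₂)ᶜ = ∅ ∨ ∃ x : V, (orbSet G A₂)ᶜ = orb G x))) := by
  constructor
  · intro h
    by_cases hB : (orbSet G A₁)ᶜ = (orbSet G A₂)ᶜ
    · exact Or.inl hB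
    · right
      have h' : ∀ x y : V, Indis G A₂ x y ↔ Indis G A₁ x y := fun x y => (h x y).symm
      by_cases h12 : (orbSet G A₁)ᶜ ⊆ (orbSet G A₂)ᶜ
      · -- B₂ \ B₁ nonempty
        have h21 : ¬ (orbSet G A₂)ᶜ ⊆ (orbSet G A₁)ᶜ := fun hs => hB (le_antisymm h12 hs)
        obtain ⟨x, hx2, hx1⟩ := Set.not_subset.mp h21
        have hB2 : (orbSet G A₂)ᶜ = orb G x := B_eq_orb h' hx2 hx1
        refine ⟨Or.inl ?_, Or.inr ⟨x, hB2⟩⟩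
        by_contra hne
        obtain ⟨y, hy⟩ := Set.nonempty_iff_ne_empty.mpr hne
        have hy2 : y ∈ (orbSet G A₂)ᶜ := h12 hy
        rw [hB2] at hy2
        exact hx1 (mem_compl_orbSet_of_orb hy (mem_orb_symm hy2))
      · obtain ⟨x, hx1, hx2⟩ := Set.not_subset.mp h12
        have hB1 : (orbSet G A₁)ᶜ = orb G x := B_eq_orb h hx1 hx2
        refine ⟨Or.inr ⟨x, hB1⟩, ?_⟩
        rcases Set.eq_empty_or_nonempty ((orbSet G A₂)ᶜ) with he | ⟨y, hy⟩
        · exact Or.inl he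
        · right
          by_cases hy1 : y ∈ (orbSet G A₁)ᶜ
          · exfalso
            rw [hB1] at hy1
            exact hx2 (mem_compl_orbSet_of_orb hy (mem_orb_symm hy1))
          · exact ⟨y, B_eq_orb h' hy hy1⟩
  · rintro (hB | ⟨h1, h2⟩)
    · intro x y
      have hOA : orbSet G A₁ = orbSet G A₂ := by
        have := congrArg (·ᶜ) hB
        simpa using this
      rw [indis_char, indis_char, hOA]
    · intro x y
      rw [indis_iff_orb_eq h1, indis_iff_orb_eq h2]
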